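/- Let X be a compact Hausdorff space, A a C*-algebra equipped with a unital *-homomorphism from C(X) into the center of the multiplier algebra of A (a C(X)-algebra structure), and for x ∈ X let C₀(X∖{x}) denote continuous functions vanishing at x. Then for every a ∈ A, the function x ↦ ‖a + C₀(X∖{x})·A‖ (the norm of the image of a in the quotient A/(C₀(X∖{x})·A)) is upper semicontinuous on X. -/
import Mathlib


open Metric
open scoped MultiplierAlgebra

/-- The closed ideal `C₀(X∖{x})·A` of a `C(X)`-algebra `A`, where the `C(X)`-structure is
given by a unital *-homomorphism `Φ : C(X) → M(A)` with central range. -/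
def fibreIdeal {X : Type*} [TopologicalSpace X] [CompactSpace X] [T2Space X]
    {A : Type*} [NonUnitalNormedRing A] [StarRing A] [CStarRing A]
    [NormedSpace ℂ A] [SMulCommClass ℂ A A] [IsScalarTower ℂ A A] [StarModule ℂ A]
    [NormedStarGroup A]
    (Φ : C(X, ℂ) →⋆ₐ[ℂ] 𝓜(ℂ, A)) (x : X) : Set A :=
  closure (Submodule.span ℂ
    {b : A | ∃ (f : C(X, ℂ)) (c : A), f x = 0 ∧ b = (Φ f).toProd.1 c} : Set A)

section Aux

variable {X : Type*} [TopologicalSpace X] [CompactSpace X] [T2Space X]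
    {A : Type*} [NonUnitalNormedRing A] [StarRing A] [CStarRing A]
    [NormedSpace ℂ A] [SMulCommClass ℂ A A] [IsScalarTower ℂ A A] [StarModule ℂ A]
    [NormedStarGroup A]
    (Φ : C(X, ℂ) →⋆ₐ[ℂ] 𝓜(ℂ, A))

theorem fibreIdeal_nonempty (x : X) : (fibreIdeal Φ x).Nonempty :=
  ⟨0, subset_closure (Submodule.zero_mem _)⟩

theorem fibreIdeal_eq (x : X) : fibreIdeal Φ x = ((Submodule.span ℂ
    {b : A | ∃ (f : C(X, ℂ)) (c : A), f x = 0 ∧ b = (Φ f).toProd.1 c}).topologicalClosure :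
    Set A) := rfl

theorem fibreIdeal_add_mem {x : X} {b c : A} (hb : b ∈ fibreIdeal Φ x)
    (hc : c ∈ fibreIdeal Φ x) : b + c ∈ fibreIdeal Φ x := by
  rw [fibreIdeal_eq] at hb hc ⊢
  exact Submodule.add_mem _ hb hc

/-- Key approximation lemma: for `b` in the algebraic ideal at `x`, the distance from `b`
to the fibre ideal at `y` tends to `0` as `y → x`. -/
theorem aux_eventually {x : X} {b : A}
    (hb : b ∈ Submodule.span ℂ
      {b : A | ∃ (f : C(X, ℂ)) (c : A), f x = 0 ∧ b = (Φ f).toProd.1 c}) :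
    ∀ ε > (0 : ℝ), ∀ᶠ y in nhds x, infDist b (fibreIdeal Φ y) < ε := by
  induction hb using Submodule.span_induction with
  | mem b hmem =>
    obtain ⟨f, c, hfx, rfl⟩ := hmem
    intro ε hε
    have hf : Filter.Tendsto (fun y => ‖f y‖ * ‖c‖) (nhds x) (nhds (‖f x‖ * ‖c‖)) :=
      ((f.continuous.tendsto x).norm.mul_const _)
    rw [hfx] at hf
    simp only [norm_zero, zero_mul] at hf
    filter_upwards [hf.eventually_lt_const hε] with y hy
    set g : C(X, ℂ) := f - (f y) • (1 : C(X, ℂ)) with hg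
    have hgy : g y = 0 := by simp [hg]
    have hmem' : (Φ g).toProd.1 c ∈ fibreIdeal Φ y :=
      subset_closure (Submodule.subset_span ⟨g, c, hgy, rfl⟩)
    refine lt_of_le_of_lt (infDist_le_dist_of_mem hmem') ?_
    have hΦg : Φ g = Φ f - (f y) • 1 := by
      simp [hg, map_sub]
    have : (Φ g).toProd.1 c = (Φ f).toProd.1 c - (f y) • c := by
      rw [hΦg]
      simp [DoubleCentralizer.sub_toProd, DoubleCentralizer.smul_toProd,
        DoubleCentralizer.one_toProd]
    rw [dist_eq_norm, this]
    simpa [norm_smul] using hy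
  | zero =>
    intro ε hε
    filter_upwards with y
    have : (0 : A) ∈ fibreIdeal Φ y := subset_closure (Submodule.zero_mem _)
    simpa [infDist_zero_of_mem this] using hε
  | add b c hb hc ihb ihc =>
    intro ε hε
    filter_upwards [ihb (ε / 2) (by linarith), ihc (ε / 2) (by linarith)] with y hy1 hy2
    obtain ⟨b', hb', hbd⟩ := (infDist_lt_iff (fibreIdeal_nonempty Φ y)).mp hy1
    obtain ⟨c', hc', hcd⟩ := (infDist_lt_iff (fibreIdeal_nonempty Φ y)).mp hy2
    refine lt_of_le_of_lt (infDist_le_dist_of_mem (fibreIdeal_add_mem Φ hb' hc')) ?_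
    calc dist (b + c) (b' + c') ≤ dist b b' + dist c c' := dist_add_add_le _ _ _ _
    _ < ε := by linarith
  | smul r b hb ih =>
    intro ε hε
    have hr : (0:ℝ) < ε / (‖r‖ + 1) := by positivity
    filter_upwards [ih _ hr] with y hy
    obtain ⟨b', hb', hbd⟩ := (infDist_lt_iff (fibreIdeal_nonempty Φ y)).mp hy
    have hb'' : r • b' ∈ fibreIdeal Φ y := by
      rw [fibreIdeal_eq] at hb' ⊢
      exact Submodule.smul_mem _ r hb'
    refine lt_of_le_of_lt (infDist_le_dist_of_mem hb'') ?_
    rw [dist_smul₀]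
    calc ‖r‖ * dist b b' ≤ ‖r‖ * (ε / (‖r‖ + 1)) := by
          exact mul_le_mul_of_nonneg_left hbd.le (norm_nonneg r)
    _ < ε := by
          rw [mul_div_assoc', div_lt_iff₀ (by positivity)]
          nlinarith [norm_nonneg r]

end Aux

/-- For a `C(X)`-algebra `A` and `a ∈ A`, the map `x ↦ ‖π_x(a)‖` (the quotient norm of the
image of `a` in `A/(C₀(X∖{x})·A)`, i.e. the distance from `a` to that ideal) is upper
semicontinuous. -/
theorem norm_fibre_upperSemicontinuous {X : Type*}
    [TopologicalSpace X] [CompactSpace X] [T2Space X]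
    {A : Type*} [NonUnitalNormedRing A] [StarRing A] [CStarRing A]
    [NormedSpace ℂ A] [SMulCommClass ℂ A A] [IsScalarTower ℂ A A] [StarModule ℂ A]
    [NormedStarGroup A]
    (Φ : C(X, ℂ) →⋆ₐ[ℂ] 𝓜(ℂ, A))
    (hcentral : ∀ f : C(X, ℂ), Φ f ∈ Set.center 𝓜(ℂ, A))
    (a : A) :
    UpperSemicontinuous (fun x : X => infDist a (fibreIdeal Φ x)) := by
  intro x C hC
  simp only at hC ⊢
  have hC' : infDist a (Submodule.span ℂ
      {b : A | ∃ (f : C(X, ℂ)) (c : A), f x = 0 ∧ b = (Φ f).toProd.1 c} : Set A) < C := by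
    rwa [fibreIdeal, infDist_closure] at hC
  obtain ⟨b, hb, hbd⟩ := (infDist_lt_iff ⟨0, Submodule.zero_mem _⟩).mp hC'
  have hδ : (0:ℝ) < C - dist a b := by linarith
  filter_upwards [aux_eventually Φ hb _ hδ] with y hy
  calc infDist a (fibreIdeal Φ y) ≤ infDist b (fibreIdeal Φ y) + dist a b :=
        infDist_le_infDist_add_dist
  _ < (C - dist a b) + dist a b := by linarith
  _ = C := by ring
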